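/- For ξ = (ξ₁,ξ₂) ∈ ℝ² with ξ₁ ≠ 0 and ξ₂ ≠ 0, set λ₋(ξ) = |ξ|²(1 − √(1 − ξ₁²/|ξ|²)), λ₊(ξ) = |ξ|²(1 + √(1 − ξ₁²/|ξ|²)), a(ξ) = (ξ₁² − λ₋(ξ))/ξ₁, N(ξ) = √(ξ₂² + a(ξ)²), and P(ξ) = N(ξ)⁻¹·[[−ξ₂, a(ξ)],[a(ξ), ξ₂]]. Let W(ξ) ∈ ℝ² be the vector W(ξ) = P(ξ)·diag(λ₋(ξ)⁻¹, λ₊(ξ)⁻¹)·P(ξ) applied to the column vector ξ. Then there exists a constant C > 0, independent of ξ, such that |W(ξ)₁| ≤ C(λ₋(ξ)^{-1/2} + λ₊(ξ)^{-1/2}) and |W(ξ)₂| ≤ C|ξ|⁻¹ for all such ξ. -/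

import Mathlib

set_option maxHeartbeats 1000000


open Matrix

/-- The slow magneto-acoustic wave speed `λ₋(ξ) = |ξ|²(1 − √(1 − ξ₁²/|ξ|²))`. -/
noncomputable def lamMinus (ξ : ℝ × ℝ) : ℝ :=
  (ξ.1 ^ 2 + ξ.2 ^ 2) * (1 - Real.sqrt (1 - ξ.1 ^ 2 / (ξ.1 ^ 2 + ξ.2 ^ 2)))

/-- The fast magneto-acoustic wave speed `λ₊(ξ) = |ξ|²(1 + √(1 − ξ₁²/|ξ|²))`. -/
noncomputable def lamPlus (ξ : ℝ × ℝ) : ℝ :=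
  (ξ.1 ^ 2 + ξ.2 ^ 2) * (1 + Real.sqrt (1 - ξ.1 ^ 2 / (ξ.1 ^ 2 + ξ.2 ^ 2)))

/-- `a(ξ) = (ξ₁² − λ₋(ξ))/ξ₁`. -/
noncomputable def aF (ξ : ℝ × ℝ) : ℝ := (ξ.1 ^ 2 - lamMinus ξ) / ξ.1

/-- The normalization factor `N(ξ) = √(ξ₂² + a(ξ)²)`. -/
noncomputable def nF (ξ : ℝ × ℝ) : ℝ := Real.sqrt (ξ.2 ^ 2 + aF ξ ^ 2)

/-- The orthonormal diagonalizer `P(ξ) = N(ξ)⁻¹·[[−ξ₂, a(ξ)],[a(ξ), ξ₂]]`. -/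
noncomputable def Pmat (ξ : ℝ × ℝ) : Matrix (Fin 2) (Fin 2) ℝ :=
  (nF ξ)⁻¹ • !![-ξ.2, aF ξ; aF ξ, ξ.2]

/-- The symbol `W(ξ) = P(ξ)·diag(λ₋⁻¹, λ₊⁻¹)·P(ξ)` applied to the vector `ξ`. -/
noncomputable def Wvec (ξ : ℝ × ℝ) : Fin 2 → ℝ :=
  (Pmat ξ * Matrix.diagonal ![(lamMinus ξ)⁻¹, (lamPlus ξ)⁻¹] * Pmat ξ).mulVec
    ![ξ.1, ξ.2]

lemma Wvec_eq (ξ : ℝ × ℝ) (h1 : ξ.1 ≠ 0) (h2 : ξ.2 ≠ 0) :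
    Wvec ξ 0 = (ξ.1)⁻¹ ∧ Wvec ξ 1 = 0 := by
  have hx : (0:ℝ) < ξ.1^2 := by positivity
  have hy : (0:ℝ) < ξ.2^2 := by positivity
  have hs : (0:ℝ) < ξ.1^2 + ξ.2^2 := by positivity
  set r := Real.sqrt (1 - ξ.1^2/(ξ.1^2+ξ.2^2)) with hrdef
  have harg : 0 < 1 - ξ.1^2/(ξ.1^2+ξ.2^2) := by
    rw [sub_pos, div_lt_one hs]; linarith
  have hr0 : 0 < r := Real.sqrt_pos.2 harg
  have hr2 : r^2 * (ξ.1^2+ξ.2^2) = ξ.2^2 := by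
    rw [hrdef, Real.sq_sqrt harg.le]; field_simp; ring
  have hrsq : r^2 < 1 := by
    have h := hr2
    nlinarith [hr2, hx, hs]
  have hr1 : r < 1 := by nlinarith [hrsq, hr0]
  have h1m : (0:ℝ) < 1 - r := by linarith
  have h1p : (0:ℝ) < 1 + r := by linarith
  have hlm : lamMinus ξ = (ξ.1^2+ξ.2^2)*(1-r) := by rw [lamMinus, hrdef]
  have hlp : lamPlus ξ = (ξ.1^2+ξ.2^2)*(1+r) := by rw [lamPlus, hrdef]
  have hlm0 : 0 < lamMinus ξ := by rw [hlm]; exact mul_pos hs h1m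
  have hlp0 : 0 < lamPlus ξ := by rw [hlp]; exact mul_pos hs h1p
  have hA : aF ξ = ξ.1 * r / (1+r) := by
    rw [aF, hlm, div_eq_div_iff h1 h1p.ne']
    linear_combination hr2
  have hn2 : nF ξ^2 = 2*ξ.2^2/(1+r) := by
    rw [nF, Real.sq_sqrt (by positivity), hA, eq_div_iff h1p.ne']
    field_simp
    linear_combination hr2
  have hy2 : ξ.2^2 = r^2*ξ.1^2/(1-r^2) := by
    rw [eq_div_iff (by nlinarith : (1:ℝ)-r^2 ≠ 0)]
    linear_combination -hr2
  have hn0 : 0 < nF ξ := Real.sqrt_pos.2 (by positivity)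
  have hrr : (1:ℝ) - r^2 ≠ 0 := by nlinarith
  have hlm' : lamMinus ξ = ξ.1^2/(1+r) := by
    rw [hlm, hy2]; field_simp; ring
  have hlp' : lamPlus ξ = ξ.1^2/(1-r) := by
    rw [hlp, hy2]; field_simp; ring
  have hn2' : nF ξ^2 = 2*r^2*ξ.1^2/((1-r^2)*(1+r)) := by
    rw [hn2, hy2]; field_simp
  have hd : (Matrix.diagonal ![(lamMinus ξ)⁻¹, (lamPlus ξ)⁻¹])
      = !![(lamMinus ξ)⁻¹, 0; 0, (lamPlus ξ)⁻¹] := by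
    ext i j
    fin_cases i <;> fin_cases j <;> simp [Matrix.diagonal]
  constructor
  · have hW0 : Wvec ξ 0 = ((nF ξ)⁻¹)^2 *
        ((ξ.2^2*(lamMinus ξ)⁻¹ + (aF ξ)^2*(lamPlus ξ)⁻¹)*ξ.1
          + aF ξ*(lamPlus ξ)⁻¹*ξ.2^2 - aF ξ*(lamMinus ξ)⁻¹*ξ.2^2) := by
      simp [Wvec, Pmat, hd, Matrix.mulVec, Matrix.mul_apply, dotProduct,
        Fin.sum_univ_two]
      ring
    rw [hW0, inv_pow, hn2', hA, hlm', hlp', hy2]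
    field_simp
    ring
  · have hW1 : Wvec ξ 1 = ((nF ξ)⁻¹)^2 * ξ.2 *
        (aF ξ*((lamPlus ξ)⁻¹ - (lamMinus ξ)⁻¹)*ξ.1
          + (aF ξ)^2*(lamMinus ξ)⁻¹ + ξ.2^2*(lamPlus ξ)⁻¹) := by
      simp [Wvec, Pmat, hd, Matrix.mulVec, Matrix.mul_apply, dotProduct,
        Fin.sum_univ_two]
      ring
    rw [hW1]
    have hz : aF ξ*((lamPlus ξ)⁻¹ - (lamMinus ξ)⁻¹)*ξ.1
          + (aF ξ)^2*(lamMinus ξ)⁻¹ + ξ.2^2*(lamPlus ξ)⁻¹ = 0 := by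
      rw [hA, hlm', hlp', hy2]
      field_simp
      ring
    rw [hz, mul_zero]

lemma lam_facts (ξ : ℝ × ℝ) (h1 : ξ.1 ≠ 0) (h2 : ξ.2 ≠ 0) :
    0 < lamMinus ξ ∧ lamMinus ξ ≤ ξ.1^2 ∧ 0 < lamPlus ξ := by
  have hx : (0:ℝ) < ξ.1^2 := by positivity
  have hy : (0:ℝ) < ξ.2^2 := by positivity
  have hs : (0:ℝ) < ξ.1^2 + ξ.2^2 := by positivity
  set r := Real.sqrt (1 - ξ.1^2/(ξ.1^2+ξ.2^2)) with hrdef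
  have harg : 0 < 1 - ξ.1^2/(ξ.1^2+ξ.2^2) := by
    rw [sub_pos, div_lt_one hs]; linarith
  have hr0 : 0 < r := Real.sqrt_pos.2 harg
  have hr2 : r^2 * (ξ.1^2+ξ.2^2) = ξ.2^2 := by
    rw [hrdef, Real.sq_sqrt harg.le]; field_simp; ring
  have hrsq : r^2 < 1 := by nlinarith [hr2, hx, hs]
  have hr1 : r < 1 := by nlinarith [hrsq, hr0]
  have hlm : lamMinus ξ = (ξ.1^2+ξ.2^2)*(1-r) := by rw [lamMinus, hrdef]
  have hlp : lamPlus ξ = (ξ.1^2+ξ.2^2)*(1+r) := by rw [lamPlus, hrdef]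
  refine ⟨by rw [hlm]; exact mul_pos hs (by linarith), ?_, by rw [hlp]; exact mul_pos hs (by linarith)⟩
  rw [hlm]
  nlinarith [hr2, mul_pos hs hr0, hr1, hr0]

/-- The multiplier estimates (le21a)–(le21b):
`|W(ξ)₁| ≤ C(λ₋(ξ)^{-1/2} + λ₊(ξ)^{-1/2})` and `|W(ξ)₂| ≤ C|ξ|⁻¹`
with a constant `C` independent of `ξ`. -/
theorem Wvec_bounds :
    ∃ C : ℝ, 0 < C ∧ ∀ ξ : ℝ × ℝ, ξ.1 ≠ 0 → ξ.2 ≠ 0 →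
      |Wvec ξ 0| ≤ C * ((Real.sqrt (lamMinus ξ))⁻¹ + (Real.sqrt (lamPlus ξ))⁻¹)
      ∧ |Wvec ξ 1| ≤ C * (Real.sqrt (ξ.1 ^ 2 + ξ.2 ^ 2))⁻¹ := by
  refine ⟨1, one_pos, fun ξ h1 h2 => ?_⟩
  obtain ⟨hW0, hW1⟩ := Wvec_eq ξ h1 h2
  obtain ⟨hlm0, hle, hlp0⟩ := lam_facts ξ h1 h2
  constructor
  · rw [hW0, abs_inv, one_mul]
    have hsq : Real.sqrt (lamMinus ξ) ≤ |ξ.1| := by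
      calc Real.sqrt (lamMinus ξ) ≤ Real.sqrt (ξ.1^2) := Real.sqrt_le_sqrt hle
        _ = |ξ.1| := Real.sqrt_sq_eq_abs ξ.1
    have h0 : 0 < Real.sqrt (lamMinus ξ) := Real.sqrt_pos.2 hlm0
    have : |ξ.1|⁻¹ ≤ (Real.sqrt (lamMinus ξ))⁻¹ := by
      apply inv_anti₀ h0 hsq
    have hnn : 0 ≤ (Real.sqrt (lamPlus ξ))⁻¹ := by positivity
    linarith
  · rw [hW1, abs_zero, one_mul]
    positivity
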